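/- For ε > 0 and R > 0 define χ_{R,ε}(x) = e^{ε(|x|−R)} − 1 for R < |x| ≤ 2R, χ_{R,ε}(x) = e^{ε(3R−|x|)} − 1 for 2R < |x| < 3R, and 0 otherwise. Suppose f ∈ H¹(ℝ³) satisfies ‖χ_{R,ε} f‖_{H¹} ≤ C with C independent of R. Then there exists ε′ > 0 such that e^{ε′|x|} f ∈ H¹(ℝ³). -/

import Mathlib

open MeasureTheory Set
open scoped ENNReal

noncomputable section

/-- The exponential weight function `χ_{R,ε}`. -/
def chiWeight (R ε : ℝ) (x : EuclideanSpace ℝ (Fin 3)) : ℝ :=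
  if R < ‖x‖ ∧ ‖x‖ ≤ 2 * R then Real.exp (ε * (‖x‖ - R)) - 1
  else if 2 * R < ‖x‖ ∧ ‖x‖ < 3 * R then Real.exp (ε * (3 * R - ‖x‖)) - 1
  else 0

private abbrev E3 := EuclideanSpace ℝ (Fin 3)

private lemma ennreal_sq_add_le (x y : ℝ≥0∞) : (x + y)^2 ≤ 3 * (x^2 + y^2) := by
  have hxy : x * y ≤ x^2 + y^2 := by
    rcases le_total x y with h | h
    · calc x * y ≤ y * y := mul_le_mul_left h y
        _ = y^2 := (sq y).symm
        _ ≤ x^2 + y^2 := le_add_self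
    · calc x * y ≤ x * x := mul_le_mul_right h x
        _ = x^2 := (sq x).symm
        _ ≤ x^2 + y^2 := le_self_add
  calc (x + y)^2 = x^2 + 2*(x*y) + y^2 := by rw [add_sq]; ring
    _ ≤ x^2 + 2*(x^2+y^2) + y^2 := by gcongr
    _ ≤ 3 * (x^2 + y^2) := by ring_nf; rfl

private lemma ennreal_sq_add3_le (x y z : ℝ≥0∞) : (x + y + z)^2 ≤ 9 * (x^2 + y^2 + z^2) := by
  calc (x + y + z)^2 ≤ 3 * ((x+y)^2 + z^2) := ennreal_sq_add_le _ _
    _ ≤ 3 * (3 * (x^2 + y^2) + z^2) := by gcongr; exact ennreal_sq_add_le _ _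
    _ = 9 * (x^2+y^2) + 3*z^2 := by ring
    _ ≤ 9 * (x^2+y^2) + 9*z^2 := by gcongr <;> norm_num
    _ = 9 * (x^2 + y^2 + z^2) := by ring

private lemma sq_eLpNorm_two {α F : Type*} [MeasurableSpace α] {μ : Measure α}
    [NormedAddCommGroup F] (g : α → F) :
    ∫⁻ x, ENNReal.ofReal ‖g x‖ ^ 2 ∂μ = eLpNorm g 2 μ ^ 2 := by
  rw [eLpNorm_eq_lintegral_rpow_enorm_toReal two_ne_zero ENNReal.ofNat_ne_top]
  rw [← ENNReal.rpow_natCast _ 2, ← ENNReal.rpow_mul]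
  norm_num

private lemma exists_annulus_index (b r : ℝ) (hb : 0 < b) (hr : b < r) :
    ∃ k : ℕ, b * (4/3:ℝ)^k < r ∧ r ≤ b * (4/3:ℝ)^(k+1) := by
  classical
  have hq : (1:ℝ) < 4/3 := by norm_num
  have hne : ∃ n : ℕ, r ≤ b * (4/3:ℝ)^(n+1) := by
    obtain ⟨n, hn⟩ := pow_unbounded_of_one_lt (r / b) hq
    refine ⟨n, ?_⟩
    have : r < b * (4/3:ℝ)^n := by
      rw [div_lt_iff₀ hb] at hn; linarith [hn]
    have hpow : b * (4/3:ℝ)^n ≤ b * (4/3:ℝ)^(n+1) :=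
      mul_le_mul_of_nonneg_left (pow_le_pow_right₀ (le_of_lt hq) (Nat.le_succ n)) hb.le
    linarith
  let k := Nat.find hne
  refine ⟨k, ?_, Nat.find_spec hne⟩
  rcases Nat.eq_zero_or_pos k with hk | hk
  · simpa [hk] using hr
  · obtain ⟨m, hm⟩ := Nat.exists_eq_add_of_lt hk
    have hmin := Nat.find_min hne (show m < k by omega)
    have : k = m + 1 := by omega
    rw [this]
    push_neg at hmin
    exact hmin

private lemma lintegral_finite_of_annuli (u : E3 → ℝ≥0∞) (a : ℕ → ℝ) (c : ℕ → ℝ≥0∞)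
    (hB : ∫⁻ x in {x : E3 | ‖x‖ ≤ a 0}, u x < ⊤)
    (hA : ∀ k, ∫⁻ x in {x : E3 | a k < ‖x‖ ∧ ‖x‖ ≤ a (k+1)}, u x ≤ c k)
    (hc : ∑' k, c k < ⊤)
    (hcov : ∀ r : ℝ, a 0 < r → ∃ k, a k < r ∧ r ≤ a (k+1)) :
    ∫⁻ x, u x < ⊤ := by
  have hU : (Set.univ : Set E3) ⊆ {x : E3 | ‖x‖ ≤ a 0} ∪ ⋃ k, {x : E3 | a k < ‖x‖ ∧ ‖x‖ ≤ a (k+1)} := by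
    intro x _
    by_cases h : ‖x‖ ≤ a 0
    · exact Or.inl h
    · right
      obtain ⟨k, h1, h2⟩ := hcov ‖x‖ (lt_of_not_ge h)
      exact mem_iUnion.2 ⟨k, h1, h2⟩
  calc ∫⁻ x, u x = ∫⁻ x in Set.univ, u x := (setLIntegral_univ u).symm
    _ ≤ ∫⁻ x in {x : E3 | ‖x‖ ≤ a 0} ∪ ⋃ k, {x : E3 | a k < ‖x‖ ∧ ‖x‖ ≤ a (k+1)}, u x :=
        lintegral_mono_set hU
    _ ≤ (∫⁻ x in {x : E3 | ‖x‖ ≤ a 0}, u x)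
        + ∫⁻ x in ⋃ k, {x : E3 | a k < ‖x‖ ∧ ‖x‖ ≤ a (k+1)}, u x := lintegral_union_le _ _ _
    _ ≤ (∫⁻ x in {x : E3 | ‖x‖ ≤ a 0}, u x)
        + ∑' k, ∫⁻ x in {x : E3 | a k < ‖x‖ ∧ ‖x‖ ≤ a (k+1)}, u x := by
        gcongr
        calc ∫⁻ x in ⋃ k, {x : E3 | a k < ‖x‖ ∧ ‖x‖ ≤ a (k+1)}, u x
            ≤ ∫⁻ x, u x ∂(Measure.sum fun k => volume.restrict {x : E3 | a k < ‖x‖ ∧ ‖x‖ ≤ a (k+1)}) :=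
              lintegral_mono' Measure.restrict_iUnion_le le_rfl
          _ = ∑' k, ∫⁻ x in {x : E3 | a k < ‖x‖ ∧ ‖x‖ ≤ a (k+1)}, u x := lintegral_sum_measure _ _
    _ < ⊤ := by
        apply ENNReal.add_lt_top.2
        exact ⟨hB, lt_of_le_of_lt (ENNReal.tsum_le_tsum hA) hc⟩

private lemma norm_hasFDerivAt {x : E3} (hx : x ≠ 0) :
    ∃ N : E3 →L[ℝ] ℝ, HasFDerivAt (fun y : E3 => ‖y‖) N x ∧ ‖N‖ ≤ 1 := by
  have hd : DifferentiableAt ℝ (fun y : E3 => ‖y‖) x := by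
    have := DifferentiableAt.norm ℝ (differentiableAt_id (𝕜 := ℝ) (x := x)) hx
    simpa using this
  refine ⟨fderiv ℝ (fun y : E3 => ‖y‖) x, hd.hasFDerivAt, ?_⟩
  have := hd.hasFDerivAt.le_of_lipschitz (lipschitzWith_one_norm (E := E3))
  simpa using this

private lemma exp_norm_hasFDerivAt' {x : E3} (hx : x ≠ 0) (b c : ℝ) :
    ∃ L : E3 →L[ℝ] ℝ, HasFDerivAt (fun y : E3 => Real.exp (b * ‖y‖ + c)) L x ∧
      ‖L‖ ≤ |b| * Real.exp (b * ‖x‖ + c) := by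
  obtain ⟨N, hN, hN1⟩ := norm_hasFDerivAt hx
  have h1 : HasFDerivAt (fun y : E3 => b * ‖y‖ + c) (b • N) x := (hN.const_mul b).add_const c
  have h2 := (Real.hasDerivAt_exp (b * ‖x‖ + c)).comp_hasFDerivAt x h1
  refine ⟨Real.exp (b * ‖x‖ + c) • (b • N), h2, ?_⟩
  rw [smul_smul]
  have hns : ‖(Real.exp (b*‖x‖+c) * b) • N‖ = |Real.exp (b*‖x‖+c) * b| * ‖N‖ := by
    rw [show ‖(Real.exp (b*‖x‖+c) * b) • N‖ = ‖Real.exp (b*‖x‖+c) * b‖ * ‖N‖ from norm_smul (Real.exp (b*‖x‖+c) * b) N,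
      Real.norm_eq_abs]
  rw [hns, abs_mul, abs_of_pos (Real.exp_pos _)]
  calc Real.exp (b*‖x‖+c) * |b| * ‖N‖ ≤ Real.exp (b*‖x‖+c) * |b| * 1 := by
        have h0 : (0:ℝ) ≤ Real.exp (b*‖x‖+c) * |b| := by positivity
        exact mul_le_mul_of_nonneg_left hN1 h0
    _ = |b| * Real.exp (b*‖x‖+c) := by ring

private lemma chi_deriv_bound (f : E3 → ℂ) (hf : Differentiable ℝ f) {ε R : ℝ}
    (hε : 0 < ε) (hR : 0 < R) {x : E3} (hx1 : R < ‖x‖) (hx2 : ‖x‖ < 2*R) :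
    (Real.exp (ε*(‖x‖-R)) - 1) * ‖fderiv ℝ f x‖ ≤
      ‖fderiv ℝ (fun y => chiWeight R ε y • f y) x‖
        + ε * ((Real.exp (ε*(‖x‖-R)) - 1) * ‖f x‖) + ε * ‖f x‖ := by
  have hx0 : x ≠ 0 := by intro h; rw [h, norm_zero] at hx1; linarith
  obtain ⟨L, hL, hLle⟩ := exp_norm_hasFDerivAt' hx0 ε (-(ε*R))
  have heq : (fun y : E3 => Real.exp (ε*‖y‖ + -(ε*R))) = fun y : E3 => Real.exp (ε*(‖y‖-R)) := by
    funext y; ring_nf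
  have heq1 : (fun y : E3 => Real.exp (ε*‖y‖ + -(ε*R)) - 1)
      = fun y : E3 => Real.exp (ε*(‖y‖-R)) - 1 := by
    funext y; ring_nf
  have hψ : HasFDerivAt (fun y : E3 => Real.exp (ε*(‖y‖-R)) - 1) L x :=
    heq1 ▸ (hL.sub_const 1)
  have hmem : ∀ y : E3, R < ‖y‖ → ‖y‖ < 2*R → chiWeight R ε y = Real.exp (ε*(‖y‖-R)) - 1 := by
    intro y h1 h2; simp [chiWeight, h1, le_of_lt h2]
  have hopen : IsOpen {y : E3 | R < ‖y‖ ∧ ‖y‖ < 2*R} :=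
    (isOpen_lt continuous_const continuous_norm).inter (isOpen_lt continuous_norm continuous_const)
  have hev : chiWeight R ε =ᶠ[nhds x] (fun y : E3 => Real.exp (ε*(‖y‖-R)) - 1) := by
    filter_upwards [hopen.mem_nhds ⟨hx1, hx2⟩] with y hy
    exact hmem y hy.1 hy.2
  have hchiD : HasFDerivAt (chiWeight R ε) L x := hψ.congr_of_eventuallyEq hev
  have hprod : fderiv ℝ (fun y => chiWeight R ε y • f y) x
      = chiWeight R ε x • fderiv ℝ f x + (fderiv ℝ (chiWeight R ε) x).smulRight (f x) :=
    fderiv_smul hchiD.differentiableAt (hf x)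
  have hfd : fderiv ℝ (chiWeight R ε) x = L := hchiD.fderiv
  have hchix : chiWeight R ε x = Real.exp (ε*(‖x‖-R)) - 1 := hmem x hx1 hx2
  have hkey : chiWeight R ε x • fderiv ℝ f x
      = fderiv ℝ (fun y => chiWeight R ε y • f y) x - (fderiv ℝ (chiWeight R ε) x).smulRight (f x) := by
    rw [hprod]; abel
  have h1 : ‖chiWeight R ε x • fderiv ℝ f x‖ ≤ ‖fderiv ℝ (fun y => chiWeight R ε y • f y) x‖
      + ‖L‖ * ‖f x‖ := by
    rw [hkey, hfd]
    refine (norm_sub_le _ _).trans ?_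
    rw [ContinuousLinearMap.norm_smulRight_apply]
  have hge : (1:ℝ) ≤ Real.exp (ε*(‖x‖-R)) := Real.one_le_exp (by nlinarith)
  have hnorm : ‖chiWeight R ε x • fderiv ℝ f x‖ = (Real.exp (ε*(‖x‖-R)) - 1) * ‖fderiv ℝ f x‖ := by
    rw [show ‖chiWeight R ε x • fderiv ℝ f x‖ = ‖chiWeight R ε x‖ * ‖fderiv ℝ f x‖ from norm_smul (chiWeight R ε x) (fderiv ℝ f x),
      hchix, Real.norm_eq_abs, abs_of_nonneg (by linarith)]
  have hLle' : ‖L‖ ≤ ε * Real.exp (ε*(‖x‖-R)) := by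
    have harg : ε * ‖x‖ + -(ε*R) = ε*(‖x‖-R) := by ring
    rw [harg, abs_of_pos hε] at hLle
    exact hLle
  rw [hnorm] at h1
  have h2 : ‖L‖ * ‖f x‖ ≤ ε * Real.exp (ε*(‖x‖-R)) * ‖f x‖ :=
    mul_le_mul_of_nonneg_right hLle' (norm_nonneg _)
  have h3 : ε * Real.exp (ε*(‖x‖-R)) * ‖f x‖
      = ε * ((Real.exp (ε*(‖x‖-R)) - 1) * ‖f x‖) + ε * ‖f x‖ := by ring
  linarith

private lemma weight_le_chi {ε R r : ℝ} (hε : 0 < ε) (hR : 0 < R) (hbig : 1 ≤ ε * R / 2)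
    (hr1 : 3/2 * R < r) (hr2 : r ≤ 2 * R) :
    Real.exp (ε/8 * r) ≤ 2 * Real.exp (-(ε*R)/4) * (Real.exp (ε*(r - R)) - 1) := by
  set s := Real.exp (ε*R/4) with hs_def
  have hs0 : 0 < s := Real.exp_pos _
  have hss : s * s = Real.exp (ε*R/2) := by
    rw [hs_def, ← Real.exp_add]; ring_nf
  have h2s : 2 ≤ s * s := by
    rw [hss]
    calc (2:ℝ) = 1 + 1 := by norm_num
      _ ≤ (ε*R/2) + 1 := by linarith
      _ ≤ Real.exp (ε*R/2) := by linarith [Real.add_one_le_exp (ε*R/2)]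
  have hA : Real.exp (ε/8 * r) ≤ s := Real.exp_le_exp.2 (by nlinarith)
  have hX : s * s ≤ Real.exp (ε*(r - R)) := by
    rw [hss]; exact Real.exp_le_exp.2 (by nlinarith)
  have hinv : Real.exp (-(ε*R)/4) = s⁻¹ := by
    rw [hs_def, ← Real.exp_neg]; ring_nf
  rw [hinv]
  have hcancel : s * s⁻¹ = 1 := mul_inv_cancel₀ hs0.ne'
  have hsinv : 0 < s⁻¹ := inv_pos.2 hs0
  nlinarith [mul_nonneg hsinv.le (sub_nonneg.2 hX),
    mul_nonneg hsinv.le (by linarith : (0:ℝ) ≤ s*s - 2), hA]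

private lemma weight_deriv_bound (f : E3 → ℂ) (hf : Differentiable ℝ f) {ε' : ℝ} (hε' : 0 < ε')
    {x : E3} (hx : x ≠ 0) :
    ‖fderiv ℝ (fun y => Real.exp (ε' * ‖y‖) • f y) x‖
      ≤ Real.exp (ε' * ‖x‖) * ‖fderiv ℝ f x‖ + ε' * (Real.exp (ε' * ‖x‖) * ‖f x‖) := by
  obtain ⟨L, hL, hLle⟩ := exp_norm_hasFDerivAt' hx ε' 0
  have heq : (fun y : E3 => Real.exp (ε' * ‖y‖ + 0)) = fun y : E3 => Real.exp (ε' * ‖y‖) := by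
    funext y; rw [add_zero]
  rw [heq] at hL
  rw [add_zero] at hLle
  have hprod : fderiv ℝ (fun y => Real.exp (ε' * ‖y‖) • f y) x
      = Real.exp (ε' * ‖x‖) • fderiv ℝ f x
        + (fderiv ℝ (fun y : E3 => Real.exp (ε' * ‖y‖)) x).smulRight (f x) :=
    fderiv_smul hL.differentiableAt (hf x)
  rw [hprod, hL.fderiv]
  refine (norm_add_le _ _).trans (add_le_add ?_ ?_)
  · rw [show ‖Real.exp (ε' * ‖x‖) • fderiv ℝ f x‖ = ‖Real.exp (ε' * ‖x‖)‖ * ‖fderiv ℝ f x‖ from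
      norm_smul (Real.exp (ε' * ‖x‖)) (fderiv ℝ f x), Real.norm_eq_abs,
      abs_of_pos (Real.exp_pos _)]
  · rw [ContinuousLinearMap.norm_smulRight_apply]
    rw [abs_of_pos hε'] at hLle
    calc ‖L‖ * ‖f x‖ ≤ (ε' * Real.exp (ε' * ‖x‖)) * ‖f x‖ :=
          mul_le_mul_of_nonneg_right hLle (norm_nonneg _)
      _ = ε' * (Real.exp (ε' * ‖x‖) * ‖f x‖) := by ring

private lemma setLIntegral_norm_sq_le {F : Type*} [NormedAddCommGroup F] (u : E3 → F) (s : Set E3) :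
    ∫⁻ x in s, ENNReal.ofReal ‖u x‖ ^ 2 ≤ eLpNorm u 2 volume ^ 2 := by
  refine le_trans (lintegral_mono_set (subset_univ s)) ?_
  rw [setLIntegral_univ, sq_eLpNorm_two]

private lemma bregion_lt_top {F : Type*} [NormedAddCommGroup F] (u : E3 → F)
    (hu : MemLp u 2 volume) (ε' t : ℝ) (hε' : 0 < ε') :
    ∫⁻ x in {x : E3 | ‖x‖ ≤ t}, ENNReal.ofReal (Real.exp (ε' * ‖x‖) * ‖u x‖) ^ 2 < ⊤ := by
  have hmeasB : MeasurableSet {x : E3 | ‖x‖ ≤ t} := measurableSet_le measurable_norm measurable_const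
  have hstep : ∫⁻ x in {x : E3 | ‖x‖ ≤ t}, ENNReal.ofReal (Real.exp (ε' * ‖x‖) * ‖u x‖) ^ 2
      ≤ ∫⁻ x in {x : E3 | ‖x‖ ≤ t}, ENNReal.ofReal (Real.exp (ε' * t)) ^ 2 * ENNReal.ofReal ‖u x‖ ^ 2 := by
    refine setLIntegral_mono' hmeasB ?_
    intro x hx
    have h1 : Real.exp (ε' * ‖x‖) * ‖u x‖ ≤ Real.exp (ε' * t) * ‖u x‖ :=
      mul_le_mul_of_nonneg_right (Real.exp_le_exp.2 (by
        have : ‖x‖ ≤ t := hx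
        nlinarith)) (norm_nonneg _)
    calc ENNReal.ofReal (Real.exp (ε' * ‖x‖) * ‖u x‖) ^ 2
        ≤ ENNReal.ofReal (Real.exp (ε' * t) * ‖u x‖) ^ 2 :=
          pow_le_pow_left' (ENNReal.ofReal_le_ofReal h1) 2
      _ = ENNReal.ofReal (Real.exp (ε' * t)) ^ 2 * ENNReal.ofReal ‖u x‖ ^ 2 := by
          rw [ENNReal.ofReal_mul (Real.exp_pos _).le, mul_pow]
  refine lt_of_le_of_lt hstep ?_
  rw [lintegral_const_mul' _ _ (ENNReal.pow_ne_top ENNReal.ofReal_ne_top)]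
  have h2 := setLIntegral_norm_sq_le u {x : E3 | ‖x‖ ≤ t}
  refine lt_of_le_of_lt (mul_le_mul_right h2 _) ?_
  have hfin : eLpNorm u 2 volume < ⊤ := hu.2
  exact ENNReal.mul_lt_top
    (ENNReal.pow_lt_top ENNReal.ofReal_lt_top) (ENNReal.pow_lt_top hfin)

/-- Exponential decay bootstrap lemma: if `‖χ_{R,ε} f‖_{H¹} ≤ C` uniformly in `R`
for some small `ε > 0`, then `e^{ε'|x|} f ∈ H¹` for some `ε' > 0`. -/
theorem exponential_decay_bootstrap
    (f : EuclideanSpace ℝ (Fin 3) → ℂ)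
    (hf : Differentiable ℝ f)
    (hf2 : MemLp f 2 volume) (hdf2 : MemLp (fderiv ℝ f) 2 volume)
    (hchi : ∃ ε : ℝ, 0 < ε ∧ ∃ C : ℝ, ∀ R : ℝ, 0 < R →
      eLpNorm (fun x => chiWeight R ε x • f x) 2 volume
        + eLpNorm (fderiv ℝ (fun x => chiWeight R ε x • f x)) 2 volume
        ≤ ENNReal.ofReal C) :
    ∃ ε' : ℝ, 0 < ε' ∧
      MemLp (fun x => Real.exp (ε' * ‖x‖) • f x) 2 volume ∧
      MemLp (fderiv ℝ (fun x => Real.exp (ε' * ‖x‖) • f x)) 2 volume := by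
  obtain ⟨ε, hε, C, hC⟩ := hchi
  have hC1 : ∀ R : ℝ, 0 < R →
      eLpNorm (fun x => chiWeight R ε x • f x) 2 volume ≤ ENNReal.ofReal C :=
    fun R hR => le_trans le_self_add (hC R hR)
  have hC2 : ∀ R : ℝ, 0 < R →
      eLpNorm (fderiv ℝ (fun x => chiWeight R ε x • f x)) 2 volume ≤ ENNReal.ofReal C :=
    fun R hR => le_trans le_add_self (hC R hR)
  set ε' : ℝ := ε / 8 with hε'def
  have hε' : 0 < ε' := by positivity
  set R0 : ℝ := max 1 (2/ε) with hR0def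
  have hR0a : 1 ≤ R0 := le_max_left _ _
  have hR0pos : 0 < R0 := lt_of_lt_of_le one_pos hR0a
  have hR0b : 1 ≤ ε * R0 / 2 := by
    have h := le_max_right 1 (2/ε)
    rw [div_le_iff₀ hε] at h
    rw [hR0def]
    nlinarith
  set Rk : ℕ → ℝ := fun k => R0 * (4/3)^k with hRkdef
  have hRkpos : ∀ k, 0 < Rk k := by
    intro k; simp only [hRkdef]; positivity
  have hRkge : ∀ k, R0 ≤ Rk k := by
    intro k; simp only [hRkdef]
    nlinarith [one_le_pow₀ (by norm_num : (1:ℝ) ≤ 4/3) (n := k)]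
  have hbig : ∀ k, 1 ≤ ε * Rk k / 2 := by
    intro k
    have := mul_le_mul_of_nonneg_left (hRkge k) hε.le
    linarith
  set a : ℕ → ℝ := fun k => (3/2 * R0) * (4/3)^k with hadef
  have haRk : ∀ k, a k = 3/2 * Rk k := by
    intro k; simp only [hadef, hRkdef]; ring
  have haRk1 : ∀ k, a (k+1) = 2 * Rk k := by
    intro k; simp only [hadef, hRkdef]; rw [pow_succ]; ring
  set M : ℕ → ℝ := fun k => 2 * Real.exp (-(ε * Rk k)/4) with hMdef
  have hMpos : ∀ k, 0 < M k := by
    intro k; simp only [hMdef]; positivity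
  have hSmeas : ∀ k, MeasurableSet {x : E3 | a k < ‖x‖ ∧ ‖x‖ ≤ a (k+1)} := by
    intro k
    rw [Set.setOf_and]
    exact (measurableSet_lt measurable_const measurable_norm).inter
      (measurableSet_le measurable_norm measurable_const)
  have hSpt : ∀ k, ∀ x : E3, a k < ‖x‖ → ‖x‖ ≤ a (k+1) →
      chiWeight (Rk k) ε x = Real.exp (ε*(‖x‖ - Rk k)) - 1 ∧
      1 ≤ Real.exp (ε*(‖x‖ - Rk k)) ∧
      Real.exp (ε' * ‖x‖) ≤ M k * chiWeight (Rk k) ε x := by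
    intro k x h1 h2
    rw [haRk k] at h1
    rw [haRk1 k] at h2
    have hRkp := hRkpos k
    have hlt : Rk k < ‖x‖ := by linarith
    have hchix : chiWeight (Rk k) ε x = Real.exp (ε*(‖x‖ - Rk k)) - 1 := by
      simp [chiWeight, hlt, h2]
    refine ⟨hchix, Real.one_le_exp (by nlinarith), ?_⟩
    rw [hchix]
    have hw := weight_le_chi hε hRkp (hbig k) h1 h2
    calc Real.exp (ε' * ‖x‖) = Real.exp (ε/8 * ‖x‖) := by rw [hε'def]
      _ ≤ 2 * Real.exp (-(ε * Rk k)/4) * (Real.exp (ε*(‖x‖ - Rk k)) - 1) := hw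
      _ = M k * (Real.exp (ε*(‖x‖ - Rk k)) - 1) := by simp only [hMdef]
  have hMsq : ∀ k, (M k)^2 ≤ 8/(ε*R0) * (3/4)^k := by
    intro k
    have hRkp := hRkpos k
    have ht : 0 < ε * Rk k := mul_pos hε hRkp
    have hsq : (M k)^2 = 4 * Real.exp (-(ε*Rk k)/2) := by
      simp only [hMdef]
      have h1 : (2 * Real.exp (-(ε*Rk k)/4))^2
          = 4 * (Real.exp (-(ε*Rk k)/4) * Real.exp (-(ε*Rk k)/4)) := by ring
      rw [h1, ← Real.exp_add]
      congr 2
      ring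
    have hexp : Real.exp (-(ε*Rk k)/2) ≤ 2/(ε * Rk k) := by
      rw [show -(ε*Rk k)/2 = -(ε*Rk k/2) by ring, Real.exp_neg]
      have h1 : ε*Rk k/2 ≤ Real.exp (ε*Rk k/2) := by
        linarith [Real.add_one_le_exp (ε*Rk k/2)]
      have h2 := one_div_le_one_div_of_le (by positivity : (0:ℝ) < ε*Rk k/2) h1
      rw [one_div, one_div] at h2
      calc (Real.exp (ε*Rk k/2))⁻¹ ≤ (ε*Rk k/2)⁻¹ := h2
        _ = 2/(ε*Rk k) := by rw [inv_div]
    have hprod : (3/4:ℝ)^k * (4/3)^k = 1 := by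
      rw [← mul_pow]; norm_num
    have hpow : (0:ℝ) < (4/3:ℝ)^k := by positivity
    have heq : (8:ℝ)/(ε * Rk k) = 8/(ε*R0) * (3/4)^k := by
      simp only [hRkdef]
      rw [div_mul_eq_mul_div, div_eq_div_iff (by positivity) (by positivity)]
      linear_combination (-(8*ε*R0)) * hprod
    calc (M k)^2 = 4 * Real.exp (-(ε*Rk k)/2) := hsq
      _ ≤ 4 * (2/(ε*Rk k)) := by linarith
      _ = 8/(ε*Rk k) := by ring
      _ = 8/(ε*R0) * (3/4)^k := heq
  have hMsum : ∑' k, ENNReal.ofReal (M k) ^ 2 < ⊤ := by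
    have hle : ∀ k : ℕ, ENNReal.ofReal (M k) ^ 2
        ≤ ENNReal.ofReal (8/(ε*R0)) * ENNReal.ofReal (3/4) ^ k := by
      intro k
      rw [← ENNReal.ofReal_pow (hMpos k).le, ← ENNReal.ofReal_pow (by norm_num : (0:ℝ) ≤ 3/4),
        ← ENNReal.ofReal_mul (by positivity)]
      exact ENNReal.ofReal_le_ofReal (hMsq k)
    calc ∑' k, ENNReal.ofReal (M k) ^ 2
        ≤ ∑' k : ℕ, ENNReal.ofReal (8/(ε*R0)) * ENNReal.ofReal (3/4) ^ k :=
          ENNReal.tsum_le_tsum hle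
      _ = ENNReal.ofReal (8/(ε*R0)) * ∑' k : ℕ, ENNReal.ofReal (3/4) ^ k :=
          ENNReal.tsum_mul_left
      _ = ENNReal.ofReal (8/(ε*R0)) * (1 - ENNReal.ofReal (3/4))⁻¹ := by
          rw [ENNReal.tsum_geometric]
      _ < ⊤ := by
          refine ENNReal.mul_lt_top ENNReal.ofReal_lt_top ?_
          rw [ENNReal.inv_lt_top]
          rw [tsub_pos_iff_lt]
          exact ENNReal.ofReal_lt_one.2 (by norm_num)
  have hcov : ∀ r : ℝ, a 0 < r → ∃ k, a k < r ∧ r ≤ a (k+1) := by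
    intro r hr
    have hr' : 3/2 * R0 < r := by
      have : a 0 = 3/2 * R0 := by simp only [hadef, pow_zero, mul_one]
      linarith [this ▸ hr]
    obtain ⟨k, h1, h2⟩ := exists_annulus_index (3/2*R0) r (by positivity) hr'
    exact ⟨k, by simpa only [hadef] using h1, by simpa only [hadef] using h2⟩
  have hI1 : ∫⁻ x : E3, ENNReal.ofReal (Real.exp (ε' * ‖x‖) * ‖f x‖) ^ 2 < ⊤ := by
    apply lintegral_finite_of_annuli _ a (fun k => ENNReal.ofReal (M k)^2 * ENNReal.ofReal C ^2)
    · exact bregion_lt_top f hf2 ε' (a 0) hε'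
    · intro k
      have hR := hRkpos k
      calc ∫⁻ x in {x : E3 | a k < ‖x‖ ∧ ‖x‖ ≤ a (k+1)}, ENNReal.ofReal (Real.exp (ε' * ‖x‖) * ‖f x‖) ^ 2
          ≤ ∫⁻ x in {x : E3 | a k < ‖x‖ ∧ ‖x‖ ≤ a (k+1)},
              ENNReal.ofReal (M k)^2 * ENNReal.ofReal ‖chiWeight (Rk k) ε x • f x‖^2 := by
            refine setLIntegral_mono' (hSmeas k) ?_
            intro x hx
            obtain ⟨hchix, hge1, hle⟩ := hSpt k x hx.1 hx.2
            have hchinn : 0 ≤ chiWeight (Rk k) ε x := by rw [hchix]; linarith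
            have h1 : Real.exp (ε' * ‖x‖) * ‖f x‖ ≤ M k * ‖chiWeight (Rk k) ε x • f x‖ := by
              rw [show ‖chiWeight (Rk k) ε x • f x‖ = ‖chiWeight (Rk k) ε x‖ * ‖f x‖ from
                norm_smul (chiWeight (Rk k) ε x) (f x), Real.norm_eq_abs, abs_of_nonneg hchinn]
              calc Real.exp (ε' * ‖x‖) * ‖f x‖ ≤ (M k * chiWeight (Rk k) ε x) * ‖f x‖ :=
                    mul_le_mul_of_nonneg_right hle (norm_nonneg _)
                _ = M k * (chiWeight (Rk k) ε x * ‖f x‖) := by ring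
            calc ENNReal.ofReal (Real.exp (ε' * ‖x‖) * ‖f x‖) ^ 2
                ≤ ENNReal.ofReal (M k * ‖chiWeight (Rk k) ε x • f x‖) ^ 2 :=
                  pow_le_pow_left' (ENNReal.ofReal_le_ofReal h1) 2
              _ = ENNReal.ofReal (M k)^2 * ENNReal.ofReal ‖chiWeight (Rk k) ε x • f x‖^2 := by
                  rw [ENNReal.ofReal_mul (hMpos k).le, mul_pow]
        _ = ENNReal.ofReal (M k)^2 * ∫⁻ x in {x : E3 | a k < ‖x‖ ∧ ‖x‖ ≤ a (k+1)},
              ENNReal.ofReal ‖chiWeight (Rk k) ε x • f x‖^2 :=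
            lintegral_const_mul' _ _ (ENNReal.pow_ne_top ENNReal.ofReal_ne_top)
        _ ≤ ENNReal.ofReal (M k)^2 * eLpNorm (fun x => chiWeight (Rk k) ε x • f x) 2 volume ^ 2 :=
            mul_le_mul_right (setLIntegral_norm_sq_le _ _) _
        _ ≤ ENNReal.ofReal (M k)^2 * ENNReal.ofReal C ^2 :=
            mul_le_mul_right (pow_le_pow_left' (hC1 (Rk k) hR) 2) _
    · calc ∑' k, ENNReal.ofReal (M k)^2 * ENNReal.ofReal C ^2
          = (∑' k, ENNReal.ofReal (M k)^2) * ENNReal.ofReal C ^2 := ENNReal.tsum_mul_right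
        _ < ⊤ := ENNReal.mul_lt_top hMsum (ENNReal.pow_lt_top ENNReal.ofReal_lt_top)
    · exact hcov
  have hfmeas : Measurable f := hf.continuous.measurable
  have hchimeas : ∀ R : ℝ, Measurable (chiWeight R ε) := by
    intro R
    have h1 : Measurable fun x : E3 => Real.exp (ε * (‖x‖ - R)) - 1 :=
      ((Real.continuous_exp.comp
        (continuous_const.mul (continuous_norm.sub continuous_const))).sub
          continuous_const).measurable
    have h2 : Measurable fun x : E3 => Real.exp (ε * (3*R - ‖x‖)) - 1 :=
      ((Real.continuous_exp.comp
        (continuous_const.mul (continuous_const.sub continuous_norm))).sub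
          continuous_const).measurable
    unfold chiWeight
    refine Measurable.ite ?_ h1 (Measurable.ite ?_ h2 measurable_const)
    · rw [Set.setOf_and]
      exact (measurableSet_lt measurable_const measurable_norm).inter
        (measurableSet_le measurable_norm measurable_const)
    · rw [Set.setOf_and]
      exact (measurableSet_lt measurable_const measurable_norm).inter
        (measurableSet_lt measurable_norm measurable_const)
  have hsmulmeas : ∀ R : ℝ, Measurable fun x => chiWeight R ε x • f x := by
    intro R
    have heq : (fun x => chiWeight R ε x • f x)
        = fun x => (chiWeight R ε x : ℂ) * f x := by
      funext x; rw [Complex.real_smul]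
    rw [heq]
    exact (Complex.measurable_ofReal.comp (hchimeas R)).mul hfmeas
  set K : ℝ≥0∞ := ENNReal.ofReal C ^2 + ENNReal.ofReal ε ^2 * ENNReal.ofReal C ^2
      + ENNReal.ofReal ε ^2 * eLpNorm f 2 volume ^2 with hKdef
  have hKfin : K < ⊤ := by
    rw [hKdef]
    refine ENNReal.add_lt_top.2 ⟨ENNReal.add_lt_top.2 ⟨?_, ?_⟩, ?_⟩
    · exact ENNReal.pow_lt_top ENNReal.ofReal_lt_top
    · exact ENNReal.mul_lt_top (ENNReal.pow_lt_top ENNReal.ofReal_lt_top)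
        (ENNReal.pow_lt_top ENNReal.ofReal_lt_top)
    · exact ENNReal.mul_lt_top (ENNReal.pow_lt_top ENNReal.ofReal_lt_top)
        (ENNReal.pow_lt_top hf2.2)
  have hI2 : ∫⁻ x : E3, ENNReal.ofReal (Real.exp (ε' * ‖x‖) * ‖fderiv ℝ f x‖) ^ 2 < ⊤ := by
    apply lintegral_finite_of_annuli _ a (fun k => ENNReal.ofReal (M k)^2 * (9 * K))
    · exact bregion_lt_top (fderiv ℝ f) hdf2 ε' (a 0) hε'
    · intro k
      have hsph : volume {x : E3 | ‖x‖ = 2 * Rk k} = 0 := by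
        have hset : {x : E3 | ‖x‖ = 2*Rk k} = Metric.sphere (0:E3) (2*Rk k) := by
          ext x; simp [mem_sphere_zero_iff_norm]
        rw [hset]
        exact Measure.addHaar_sphere volume 0 _
      have h2ae : ∀ᵐ x : E3 ∂volume, ‖x‖ ≠ 2 * Rk k := by
        rw [ae_iff]
        have hset2 : {x : E3 | ¬ ‖x‖ ≠ 2*Rk k} = {x : E3 | ‖x‖ = 2*Rk k} := by
          ext x; simp
        rw [hset2]
        exact hsph
      have hae : ∀ᵐ x ∂(volume.restrict {x : E3 | a k < ‖x‖ ∧ ‖x‖ ≤ a (k+1)}),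
          ENNReal.ofReal (Real.exp (ε' * ‖x‖) * ‖fderiv ℝ f x‖) ^ 2
            ≤ (ENNReal.ofReal (M k)^2 * 9) *
              (ENNReal.ofReal ‖fderiv ℝ (fun y => chiWeight (Rk k) ε y • f y) x‖^2
                + ENNReal.ofReal ε^2 * ENNReal.ofReal ‖chiWeight (Rk k) ε x • f x‖^2
                + ENNReal.ofReal ε^2 * ENNReal.ofReal ‖f x‖^2) := by
        filter_upwards [ae_restrict_mem (hSmeas k), ae_restrict_of_ae h2ae] with x hx hx2
        obtain ⟨hchix, hge1, hle⟩ := hSpt k x hx.1 hx.2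
        have hxa2 : ‖x‖ < 2 * Rk k := lt_of_le_of_ne (by rw [← haRk1 k]; exact hx.2) hx2
        have hxa1 : Rk k < ‖x‖ := by
          have h' := hx.1
          rw [haRk k] at h'
          have := hRkpos k
          linarith
        have hcd := chi_deriv_bound f hf hε (hRkpos k) hxa1 hxa2
        have hchinn : 0 ≤ chiWeight (Rk k) ε x := by rw [hchix]; linarith
        have hsm : chiWeight (Rk k) ε x * ‖f x‖ = ‖chiWeight (Rk k) ε x • f x‖ := by
          rw [show ‖chiWeight (Rk k) ε x • f x‖ = ‖chiWeight (Rk k) ε x‖ * ‖f x‖ from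
            norm_smul (chiWeight (Rk k) ε x) (f x), Real.norm_eq_abs, abs_of_nonneg hchinn]
        have hreal : Real.exp (ε' * ‖x‖) * ‖fderiv ℝ f x‖
            ≤ M k * (‖fderiv ℝ (fun y => chiWeight (Rk k) ε y • f y) x‖
              + ε * ‖chiWeight (Rk k) ε x • f x‖ + ε * ‖f x‖) := by
          have e2 : chiWeight (Rk k) ε x * ‖fderiv ℝ f x‖
              ≤ ‖fderiv ℝ (fun y => chiWeight (Rk k) ε y • f y) x‖
                + ε * ‖chiWeight (Rk k) ε x • f x‖ + ε * ‖f x‖ := by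
            calc chiWeight (Rk k) ε x * ‖fderiv ℝ f x‖
                = (Real.exp (ε*(‖x‖ - Rk k)) - 1) * ‖fderiv ℝ f x‖ := by rw [hchix]
              _ ≤ ‖fderiv ℝ (fun y => chiWeight (Rk k) ε y • f y) x‖
                  + ε * ((Real.exp (ε*(‖x‖ - Rk k)) - 1) * ‖f x‖) + ε * ‖f x‖ := hcd
              _ = ‖fderiv ℝ (fun y => chiWeight (Rk k) ε y • f y) x‖
                  + ε * ‖chiWeight (Rk k) ε x • f x‖ + ε * ‖f x‖ := by
                  rw [← hchix, hsm]
          calc Real.exp (ε' * ‖x‖) * ‖fderiv ℝ f x‖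
              ≤ (M k * chiWeight (Rk k) ε x) * ‖fderiv ℝ f x‖ :=
                mul_le_mul_of_nonneg_right hle (norm_nonneg _)
            _ = M k * (chiWeight (Rk k) ε x * ‖fderiv ℝ f x‖) := by ring
            _ ≤ M k * _ := mul_le_mul_of_nonneg_left e2 (hMpos k).le
        calc ENNReal.ofReal (Real.exp (ε' * ‖x‖) * ‖fderiv ℝ f x‖) ^ 2
            ≤ ENNReal.ofReal (M k * (‖fderiv ℝ (fun y => chiWeight (Rk k) ε y • f y) x‖
                + ε * ‖chiWeight (Rk k) ε x • f x‖ + ε * ‖f x‖)) ^ 2 :=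
              pow_le_pow_left' (ENNReal.ofReal_le_ofReal hreal) 2
          _ = ENNReal.ofReal (M k)^2 * ENNReal.ofReal (‖fderiv ℝ (fun y => chiWeight (Rk k) ε y • f y) x‖
                + ε * ‖chiWeight (Rk k) ε x • f x‖ + ε * ‖f x‖) ^ 2 := by
              rw [ENNReal.ofReal_mul (hMpos k).le, mul_pow]
          _ ≤ ENNReal.ofReal (M k)^2 * (9 *
                (ENNReal.ofReal ‖fderiv ℝ (fun y => chiWeight (Rk k) ε y • f y) x‖^2
                  + ENNReal.ofReal ε^2 * ENNReal.ofReal ‖chiWeight (Rk k) ε x • f x‖^2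
                  + ENNReal.ofReal ε^2 * ENNReal.ofReal ‖f x‖^2)) := by
              refine mul_le_mul_right ?_ _
              rw [ENNReal.ofReal_add (by positivity) (by positivity),
                ENNReal.ofReal_add (by positivity) (by positivity)]
              refine le_trans (ennreal_sq_add3_le _ _ _) ?_
              rw [ENNReal.ofReal_mul hε.le, ENNReal.ofReal_mul hε.le, mul_pow, mul_pow]
          _ = (ENNReal.ofReal (M k)^2 * 9) *
                (ENNReal.ofReal ‖fderiv ℝ (fun y => chiWeight (Rk k) ε y • f y) x‖^2
                  + ENNReal.ofReal ε^2 * ENNReal.ofReal ‖chiWeight (Rk k) ε x • f x‖^2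
                  + ENNReal.ofReal ε^2 * ENNReal.ofReal ‖f x‖^2) := by rw [mul_assoc]
      have hmA : Measurable fun x : E3 =>
          ENNReal.ofReal ‖fderiv ℝ (fun y => chiWeight (Rk k) ε y • f y) x‖^2 :=
        ((measurable_fderiv ℝ _).norm.ennreal_ofReal).pow_const 2
      have hmB : Measurable fun x : E3 =>
          ENNReal.ofReal ε^2 * ENNReal.ofReal ‖chiWeight (Rk k) ε x • f x‖^2 :=
        measurable_const.mul (((hsmulmeas (Rk k)).norm.ennreal_ofReal).pow_const 2)
      have hmC : Measurable fun x : E3 => ENNReal.ofReal ε^2 * ENNReal.ofReal ‖f x‖^2 :=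
        measurable_const.mul ((hfmeas.norm.ennreal_ofReal).pow_const 2)
      have hsplit : ∫⁻ x in {x : E3 | a k < ‖x‖ ∧ ‖x‖ ≤ a (k+1)},
          (ENNReal.ofReal ‖fderiv ℝ (fun y => chiWeight (Rk k) ε y • f y) x‖^2
            + ENNReal.ofReal ε^2 * ENNReal.ofReal ‖chiWeight (Rk k) ε x • f x‖^2
            + ENNReal.ofReal ε^2 * ENNReal.ofReal ‖f x‖^2) ≤ K := by
        rw [lintegral_add_right _ hmC, lintegral_add_right _ hmB]
        rw [hKdef]
        refine add_le_add (add_le_add ?_ ?_) ?_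
        · refine le_trans (setLIntegral_norm_sq_le _ _) ?_
          exact pow_le_pow_left' (hC2 (Rk k) (hRkpos k)) 2
        · rw [lintegral_const_mul' _ _ (ENNReal.pow_ne_top ENNReal.ofReal_ne_top)]
          refine mul_le_mul_right ?_ _
          refine le_trans (setLIntegral_norm_sq_le _ _) ?_
          exact pow_le_pow_left' (hC1 (Rk k) (hRkpos k)) 2
        · rw [lintegral_const_mul' _ _ (ENNReal.pow_ne_top ENNReal.ofReal_ne_top)]
          refine mul_le_mul_right ?_ _
          exact setLIntegral_norm_sq_le _ _
      calc ∫⁻ x in {x : E3 | a k < ‖x‖ ∧ ‖x‖ ≤ a (k+1)},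
            ENNReal.ofReal (Real.exp (ε' * ‖x‖) * ‖fderiv ℝ f x‖) ^ 2
          ≤ ∫⁻ x in {x : E3 | a k < ‖x‖ ∧ ‖x‖ ≤ a (k+1)},
              (ENNReal.ofReal (M k)^2 * 9) *
                (ENNReal.ofReal ‖fderiv ℝ (fun y => chiWeight (Rk k) ε y • f y) x‖^2
                  + ENNReal.ofReal ε^2 * ENNReal.ofReal ‖chiWeight (Rk k) ε x • f x‖^2
                  + ENNReal.ofReal ε^2 * ENNReal.ofReal ‖f x‖^2) := lintegral_mono_ae hae
        _ = (ENNReal.ofReal (M k)^2 * 9) * ∫⁻ x in {x : E3 | a k < ‖x‖ ∧ ‖x‖ ≤ a (k+1)},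
              (ENNReal.ofReal ‖fderiv ℝ (fun y => chiWeight (Rk k) ε y • f y) x‖^2
                + ENNReal.ofReal ε^2 * ENNReal.ofReal ‖chiWeight (Rk k) ε x • f x‖^2
                + ENNReal.ofReal ε^2 * ENNReal.ofReal ‖f x‖^2) :=
            lintegral_const_mul' _ _ (ENNReal.mul_ne_top
              (ENNReal.pow_ne_top ENNReal.ofReal_ne_top) (by simp))
        _ ≤ (ENNReal.ofReal (M k)^2 * 9) * K := mul_le_mul_right hsplit _
        _ = ENNReal.ofReal (M k)^2 * (9 * K) := by rw [mul_assoc]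
    · calc ∑' k, ENNReal.ofReal (M k)^2 * (9 * K)
          = (∑' k, ENNReal.ofReal (M k)^2) * (9 * K) := ENNReal.tsum_mul_right
        _ < ⊤ := ENNReal.mul_lt_top hMsum
            (ENNReal.mul_lt_top (by simp) hKfin)
    · exact hcov
  have hgnorm : ∀ x : E3, ‖Real.exp (ε' * ‖x‖) • f x‖ = Real.exp (ε' * ‖x‖) * ‖f x‖ := by
    intro x
    rw [show ‖Real.exp (ε' * ‖x‖) • f x‖ = ‖Real.exp (ε' * ‖x‖)‖ * ‖f x‖ from
      norm_smul (Real.exp (ε' * ‖x‖)) (f x), Real.norm_eq_abs, abs_of_pos (Real.exp_pos _)]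
  have hpow_lt : ∀ q : ℝ≥0∞, q^2 < ⊤ → q < ⊤ := by
    intro q hq
    by_contra h
    push_neg at h
    rw [top_le_iff.1 h] at hq
    simp [ENNReal.top_pow] at hq
  have hφm : Measurable fun x : E3 => Real.exp (ε' * ‖x‖) :=
    (Real.continuous_exp.comp (continuous_const.mul continuous_norm)).measurable
  have hfmeas' : Measurable f := hf.continuous.measurable
  refine ⟨ε', hε', ?_, ?_⟩
  · refine ⟨((Real.continuous_exp.comp (continuous_const.mul continuous_norm)).smul
      hf.continuous).aestronglyMeasurable, ?_⟩
    refine hpow_lt _ ?_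
    rw [← sq_eLpNorm_two]
    simp only [hgnorm]
    exact hI1
  · have h0 : volume ({(0:E3)} : Set E3) = 0 := by
      have hset : ({(0:E3)} : Set E3) = Metric.sphere (0:E3) 0 := by
        rw [Metric.sphere_zero]
      rw [hset]
      exact Measure.addHaar_sphere volume 0 0
    have haene : ∀ᵐ x : E3 ∂volume, x ≠ 0 := by
      rw [ae_iff]
      have hset : {x : E3 | ¬ x ≠ 0} = {(0:E3)} := by ext x; simp
      rw [hset]
      exact h0
    have haebound : ∀ᵐ x : E3 ∂volume,
        ‖fderiv ℝ (fun y => Real.exp (ε' * ‖y‖) • f y) x‖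
          ≤ ‖Real.exp (ε' * ‖x‖) * ‖fderiv ℝ f x‖ + ε' * (Real.exp (ε' * ‖x‖) * ‖f x‖)‖ := by
      filter_upwards [haene] with x hx
      refine le_trans (weight_deriv_bound f hf hε' hx) ?_
      rw [Real.norm_eq_abs]
      exact le_abs_self _
    refine MemLp.of_le ?_ ((measurable_fderiv ℝ _).aestronglyMeasurable) haebound
    have hhm : Measurable fun x : E3 =>
        Real.exp (ε' * ‖x‖) * ‖fderiv ℝ f x‖ + ε' * (Real.exp (ε' * ‖x‖) * ‖f x‖) :=
      (hφm.mul (measurable_fderiv ℝ f).norm).add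
        (measurable_const.mul (hφm.mul hfmeas'.norm))
    refine ⟨hhm.aestronglyMeasurable, ?_⟩
    refine hpow_lt _ ?_
    rw [← sq_eLpNorm_two]
    have hptwise : ∀ x : E3,
        ENNReal.ofReal ‖Real.exp (ε' * ‖x‖) * ‖fderiv ℝ f x‖
            + ε' * (Real.exp (ε' * ‖x‖) * ‖f x‖)‖ ^ 2
        ≤ 3 * (ENNReal.ofReal (Real.exp (ε' * ‖x‖) * ‖fderiv ℝ f x‖) ^2
            + ENNReal.ofReal ε' ^2 * ENNReal.ofReal (Real.exp (ε' * ‖x‖) * ‖f x‖) ^2) := by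
      intro x
      have hnn : (0:ℝ) ≤ Real.exp (ε' * ‖x‖) * ‖fderiv ℝ f x‖
          + ε' * (Real.exp (ε' * ‖x‖) * ‖f x‖) := by positivity
      rw [Real.norm_eq_abs, abs_of_nonneg hnn,
        ENNReal.ofReal_add (by positivity) (by positivity),
        ENNReal.ofReal_mul hε'.le]
      refine le_trans (ennreal_sq_add_le _ _) ?_
      rw [mul_pow]
    calc ∫⁻ x : E3, ENNReal.ofReal ‖Real.exp (ε' * ‖x‖) * ‖fderiv ℝ f x‖
            + ε' * (Real.exp (ε' * ‖x‖) * ‖f x‖)‖ ^ 2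
        ≤ ∫⁻ x : E3, 3 * (ENNReal.ofReal (Real.exp (ε' * ‖x‖) * ‖fderiv ℝ f x‖) ^2
            + ENNReal.ofReal ε' ^2 * ENNReal.ofReal (Real.exp (ε' * ‖x‖) * ‖f x‖) ^2) :=
          lintegral_mono hptwise
      _ = 3 * ∫⁻ x : E3, (ENNReal.ofReal (Real.exp (ε' * ‖x‖) * ‖fderiv ℝ f x‖) ^2
            + ENNReal.ofReal ε' ^2 * ENNReal.ofReal (Real.exp (ε' * ‖x‖) * ‖f x‖) ^2) :=
          lintegral_const_mul' _ _ (by simp)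
      _ = 3 * ((∫⁻ x : E3, ENNReal.ofReal (Real.exp (ε' * ‖x‖) * ‖fderiv ℝ f x‖) ^2)
            + ∫⁻ x : E3, ENNReal.ofReal ε' ^2 * ENNReal.ofReal (Real.exp (ε' * ‖x‖) * ‖f x‖) ^2) := by
          rw [lintegral_add_right (g := fun x : E3 => ENNReal.ofReal ε' ^2 * ENNReal.ofReal (Real.exp (ε' * ‖x‖) * ‖f x‖) ^2) _
            (measurable_const.mul (((hφm.mul hfmeas'.norm).ennreal_ofReal).pow_const 2))]
      _ = 3 * ((∫⁻ x : E3, ENNReal.ofReal (Real.exp (ε' * ‖x‖) * ‖fderiv ℝ f x‖) ^2)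
            + ENNReal.ofReal ε' ^2 * ∫⁻ x : E3, ENNReal.ofReal (Real.exp (ε' * ‖x‖) * ‖f x‖) ^2) := by
          rw [lintegral_const_mul' _ _ (ENNReal.pow_ne_top ENNReal.ofReal_ne_top)]
      _ < ⊤ := by
          refine ENNReal.mul_lt_top (by simp) (ENNReal.add_lt_top.2 ⟨hI2, ?_⟩)
          exact ENNReal.mul_lt_top (ENNReal.pow_lt_top ENNReal.ofReal_lt_top) hI1
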